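/- There exist absolute constants δ > 0 and c > 0 such that for all real numbers a > 0, b ∈ ℝ, and t > 0 satisfying t a ≤ δ and t |b| ≤ δ: ∫₀^t (sin((t − t₁) a) / a) ∫₀^{t₁} (sin((t − t₂) a) / a) cos((t₁ − t₂) b) t₂² dt₂ dt₁ ≥ c t⁶. (This is the lower bound, equations (div2c)–(div2d) of the paper, quantifying the high-to-low frequency energy transfer in the proof of Proposition 1.3: with a = ⟨n⟩ and b = ⟨k⟩ − ⟨n − k⟩ it gives E[|X_k(n,t)|²] ≳ t⁶ ⟨k⟩^{−4(1−α)}.) -/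

import Mathlib

open intervalIntegral

lemma sin_half_le {x : ℝ} (h0 : 0 ≤ x) (h1 : x ≤ 1) : x / 2 ≤ Real.sin x := by
  rcases eq_or_lt_of_le h0 with h | h
  · simp [← h]
  · have := Real.sin_gt_sub_cube h
    nlinarith [pow_le_one₀ h0 h1 (n := 2)]

lemma half_le_cos {y : ℝ} (h : |y| ≤ 1) : (1:ℝ)/2 ≤ Real.cos y := by
  have := Real.one_sub_sq_div_two_le_cos (x := y)
  have : y ^ 2 ≤ 1 := by
    have := abs_nonneg y
    nlinarith [sq_abs y]
  nlinarith [Real.one_sub_sq_div_two_le_cos (x := y)]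

lemma poly_int (t s : ℝ) :
    ∫ u in (0:ℝ)..s, ((t - u) / 2) * ((1/2) * u ^ 2)
      = (1/4) * (t * s ^ 3 / 3 - s ^ 4 / 4) := by
  have h : ∀ u : ℝ, ((t - u) / 2) * ((1/2) * u ^ 2) = (t/4) * u ^ 2 - (1/4) * u ^ 3 := by
    intro u; ring
  simp only [h]
  rw [intervalIntegral.integral_sub (f := fun u => t/4 * u ^ 2) (g := fun u => 1/4 * u ^ 3) ((continuous_const.mul (continuous_pow 2)).intervalIntegrable _ _)
      ((continuous_const.mul (continuous_pow 3)).intervalIntegrable _ _),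
    intervalIntegral.integral_const_mul, intervalIntegral.integral_const_mul,
    integral_pow, integral_pow]
  ring

lemma poly_int2 (t : ℝ) :
    ∫ s in (0:ℝ)..t, ((t - s) / 2) * ((1/4) * (t * s ^ 3 / 3 - s ^ 4 / 4))
      = t ^ 6 / 960 := by
  have h : ∀ s : ℝ, ((t - s) / 2) * ((1/4) * (t * s ^ 3 / 3 - s ^ 4 / 4))
      = (t ^ 2 / 24) * s ^ 3 - ((7 * t / 96) * s ^ 4 - (1/32) * s ^ 5) := by
    intro s; ring
  simp only [h]
  rw [intervalIntegral.integral_sub (f := fun s => t ^ 2 / 24 * s ^ 3) (g := fun s => 7 * t / 96 * s ^ 4 - 1 / 32 * s ^ 5) ((continuous_const.mul (continuous_pow 3)).intervalIntegrable _ _)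
      (((continuous_const.mul (continuous_pow 4)).sub ((continuous_const.mul (continuous_pow 5)))).intervalIntegrable _ _),
    intervalIntegral.integral_sub (f := fun s => 7 * t / 96 * s ^ 4) (g := fun s => 1 / 32 * s ^ 5) ((continuous_const.mul (continuous_pow 4)).intervalIntegrable _ _)
      ((continuous_const.mul (continuous_pow 5)).intervalIntegrable _ _),
    intervalIntegral.integral_const_mul, intervalIntegral.integral_const_mul,
    intervalIntegral.integral_const_mul, integral_pow, integral_pow, integral_pow]
  ring

/-- Lower bound (equations (div2c)–(div2d)) quantifying the high-to-low energy transfer. -/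
theorem stmt18 :
    ∃ δ > 0, ∃ c > 0, ∀ a b t : ℝ, 0 < a → 0 < t → t * a ≤ δ → t * |b| ≤ δ →
      c * t ^ 6 ≤
        ∫ t₁ in (0 : ℝ)..t, (Real.sin ((t - t₁) * a) / a) *
          ∫ t₂ in (0 : ℝ)..t₁, (Real.sin ((t - t₂) * a) / a) *
            (Real.cos ((t₁ - t₂) * b) * t₂ ^ 2) := by
  refine ⟨1/2, by norm_num, 1/960, by norm_num, fun a b t ha ht hta htb => ?_⟩
  have ht0 : (0:ℝ) ≤ t := ht.le
  -- pointwise bound on the sine factor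
  have hsin : ∀ s : ℝ, 0 ≤ s → s ≤ t → (t - s) / 2 ≤ Real.sin ((t - s) * a) / a := by
    intro s hs0 hst
    have hx0 : 0 ≤ (t - s) * a := mul_nonneg (by linarith) ha.le
    have hx1 : (t - s) * a ≤ 1 := by
      have : (t - s) * a ≤ t * a := by nlinarith
      linarith
    have := sin_half_le hx0 hx1
    rw [le_div_iff₀ ha]
    nlinarith [this]
  -- pointwise bound on the cosine factor
  have hcos : ∀ s : ℝ, 0 ≤ s → s ≤ t → (1:ℝ)/2 ≤ Real.cos (s * b) := by
    intro s hs0 hst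
    apply half_le_cos
    rw [abs_mul, abs_of_nonneg hs0]
    calc s * |b| ≤ t * |b| := by nlinarith [abs_nonneg b]
      _ ≤ 1/2 := htb
      _ ≤ 1 := by norm_num
  -- inner integral lower bound
  have hinner : ∀ t₁ : ℝ, 0 ≤ t₁ → t₁ ≤ t →
      (1/4) * (t * t₁ ^ 3 / 3 - t₁ ^ 4 / 4) ≤
        ∫ t₂ in (0:ℝ)..t₁, (Real.sin ((t - t₂) * a) / a) *
          (Real.cos ((t₁ - t₂) * b) * t₂ ^ 2) := by
    intro t₁ h0 h1
    rw [← poly_int t t₁]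
    apply intervalIntegral.integral_mono_on h0
    · exact (Continuous.intervalIntegrable (by fun_prop) _ _)
    · exact (Continuous.intervalIntegrable (by fun_prop) _ _)
    · intro u hu
      obtain ⟨hu0, hu1⟩ := hu
      have hut : u ≤ t := le_trans hu1 h1
      have h2 : (t - u) / 2 ≤ Real.sin ((t - u) * a) / a := hsin u hu0 hut
      have h3 : (1:ℝ)/2 ≤ Real.cos ((t₁ - u) * b) := hcos (t₁ - u) (by linarith) (by linarith)
      have hnn : (0:ℝ) ≤ (t - u) / 2 := by linarith
      have hnn2 : (0:ℝ) ≤ (1/2) * u ^ 2 := by positivity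
      apply mul_le_mul h2 _ hnn2 (le_trans hnn h2)
      exact mul_le_mul_of_nonneg_right h3 (sq_nonneg u)
  -- the inner integral is a continuous function of t₁
  have hcont : Continuous fun t₁ : ℝ => ∫ t₂ in (0:ℝ)..t₁,
      (Real.sin ((t - t₂) * a) / a) * (Real.cos ((t₁ - t₂) * b) * t₂ ^ 2) := by
    apply intervalIntegral.continuous_parametric_intervalIntegral_of_continuous
      (f := fun t₁ t₂ => (Real.sin ((t - t₂) * a) / a) * (Real.cos ((t₁ - t₂) * b) * t₂ ^ 2))
    · exact (by fun_prop : Continuous fun p : ℝ × ℝ =>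
        (Real.sin ((t - p.2) * a) / a) * (Real.cos ((p.1 - p.2) * b) * p.2 ^ 2))
    · exact continuous_id
  -- outer bound
  have key : ∫ s in (0:ℝ)..t, ((t - s) / 2) * ((1/4) * (t * s ^ 3 / 3 - s ^ 4 / 4)) ≤
      ∫ t₁ in (0 : ℝ)..t, (Real.sin ((t - t₁) * a) / a) *
        ∫ t₂ in (0 : ℝ)..t₁, (Real.sin ((t - t₂) * a) / a) *
          (Real.cos ((t₁ - t₂) * b) * t₂ ^ 2) := by
    apply intervalIntegral.integral_mono_on ht0
    · exact (Continuous.intervalIntegrable (by fun_prop) _ _)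
    · exact Continuous.intervalIntegrable (by fun_prop) _ _
    · intro s hs
      obtain ⟨hs0, hs1⟩ := hs
      have h2 : (t - s) / 2 ≤ Real.sin ((t - s) * a) / a := hsin s hs0 hs1
      have h4 := hinner s hs0 hs1
      have hP : (0:ℝ) ≤ (1/4) * (t * s ^ 3 / 3 - s ^ 4 / 4) := by nlinarith [mul_le_mul_of_nonneg_right hs1 (pow_nonneg hs0 3), pow_nonneg hs0 4]
      have hnn : (0:ℝ) ≤ (t - s) / 2 := by linarith
      exact mul_le_mul h2 h4 hP (le_trans hnn h2)
  rw [poly_int2 t] at key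
  linarith
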